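/- The hypertableau calculus T_{K_m(¬)}^{hyp}, obtained from T_{K_m(¬)}^{c} (T_{K_m(¬)} with the rule (∨⁺) replaced by the rules (split_k), k > 1: T(p₁∨…∨p_k,x) / T(p₁,x) | … | T(p_k,x)) by adding, for all m, n with m+n > 1, the hypertableau rules (hyp_{mn}): from T(¬p₁∨…∨¬p_m∨q₁∨…∨q_n, x) together with T(p₁,x), …, T(p_m,x) branch into T(q₁,x) | … | T(q_n,x) (a closure rule when n = 0), applicable only when p₁,…,p_m are propositional variables and none of q₁,…,q_n is a negated propositional variable (disjunction treated modulo associativity and commutativity), is sound and constructively complete for the logic K_m(¬). -/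

import Mathlib

set_option autoImplicit false

namespace KmNotTableau

/-- Relation terms of the logic `K_m(¬)`: `α ::= a_1 | … | a_m | ¬α`. -/
inductive RTerm (m : ℕ) : Type
  | atom : Fin m → RTerm m
  | neg : RTerm m → RTerm m

/-- Formulas of the logic `K_m(¬)`: `φ ::= p | ¬φ | φ∨φ | [α]φ`. -/
inductive Fm (m : ℕ) : Type
  | var : ℕ → Fm m
  | neg : Fm m → Fm m
  | or : Fm m → Fm m → Fm m
  | box : RTerm m → Fm m → Fm m

/-- A `K_m(¬)`-model `M = (W, (R_a)_a, V)` with `W` nonempty. -/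
structure KModel (m : ℕ) where
  W : Type
  ne : Nonempty W
  R : Fin m → W → W → Prop
  V : ℕ → W → Prop

/-- Interpretation of relation terms: `R_{¬α} = (W×W) ∖ R_α`. -/
def KModel.RT {m : ℕ} (M : KModel m) : RTerm m → M.W → M.W → Prop
  | .atom a => M.R a
  | .neg α => fun v w => ¬ M.RT α v w

/-- Satisfaction in a `K_m(¬)`-model. -/
def KModel.sat {m : ℕ} (M : KModel m) : M.W → Fm m → Prop
  | v, .var p => M.V p v
  | v, .neg φ => ¬ M.sat v φ
  | v, .or φ ψ => M.sat v φ ∨ M.sat v ψ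
  | v, .box α φ => ∀ w, M.RT α v w → M.sat w φ

/-- A set of formulas is satisfiable if some model and world satisfy all its members. -/
def Satisfiable {m : ℕ} (N : Set (Fm m)) : Prop :=
  ∃ (M : KModel m) (v : M.W), ∀ φ ∈ N, M.sat v φ

/-- Labels: terms generated from the initial constant `a₀` and Skolem terms `f(α,φ,t)`. -/
inductive Label (m : ℕ) : Type
  | a0 : Label m
  | sk : RTerm m → Fm m → Label m → Label m

/-- Tableau formulas: `T(φ,t)`, `F(φ,t)`, `T_R(α,t,t')`, `F_R(α,t,t')`. -/
inductive TabFm (m : ℕ) : Type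
  | T : Fm m → Label m → TabFm m
  | F : Fm m → Label m → TabFm m
  | TR : RTerm m → Label m → Label m → TabFm m
  | FR : RTerm m → Label m → Label m → TabFm m

/-- The labels occurring in a tableau formula. -/
def TabFm.labels {m : ℕ} : TabFm m → Set (Label m)
  | .T _ t => {t}
  | .F _ t => {t}
  | .TR _ t t' => {t, t'}
  | .FR _ t t' => {t, t'}

/-- The labels occurring in a set of tableau formulas (the initial label `a₀`,
introduced at the root, always counts as occurring). -/
def Lab {m : ℕ} (B : Set (TabFm m)) : Set (Label m) :=
  insert Label.a0 {t | ∃ f ∈ B, t ∈ f.labels}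

/-- A calculus: `C s ds` holds if, on a branch whose set of formulas is `s`, some rule
of the calculus is applicable with denominator instances `ds` (a closure rule
application has `ds = []`). -/
abbrev Calc (m : ℕ) := Set (TabFm m) → List (Set (TabFm m)) → Prop

/-- The root node `{T(φ,a₀) | φ ∈ N}` of a tableau for input `N`. -/
def initial {m : ℕ} (N : Set (Fm m)) : Set (TabFm m) :=
  {f | ∃ φ ∈ N, f = TabFm.T φ Label.a0}

/-- A tableau for input `N` in calculus `C`: a finitely branching tree of sets of tableau
formulas (nodes indexed by positions `List ℕ`, children of `p` being `p ++ [i]`), whose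
root is `{T(φ,a₀) | φ ∈ N}`, and such that the children of every node are obtained by
applying a rule of `C`: each child adds one denominator instance to the node's set. -/
structure Tableau (m : ℕ) (C : Calc m) (N : Set (Fm m)) where
  node : List ℕ → Option (Set (TabFm m))
  rootEq : node [] = some (initial N)
  tree : ∀ (p : List ℕ) (i : ℕ), node (p ++ [i]) ≠ none → node p ≠ none
  step : ∀ (p : List ℕ) (s : Set (TabFm m)), node p = some s →
    (∀ i : ℕ, node (p ++ [i]) = none) ∨
    (∃ ds, C s ds ∧ ∀ i : ℕ, node (p ++ [i]) = (ds[i]?).map (fun d => s ∪ d))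

/-- A branch of a tableau: a maximal path from the root (represented by its
set of positions, a maximal chain under the prefix order). -/
structure Branch {m : ℕ} {C : Calc m} {N : Set (Fm m)} (Tb : Tableau m C N) where
  pos : Set (List ℕ)
  inTree : ∀ p ∈ pos, Tb.node p ≠ none
  chain : ∀ p ∈ pos, ∀ q ∈ pos, p <+: q ∨ q <+: p
  downClosed : ∀ p ∈ pos, ∀ q : List ℕ, q <+: p → q ∈ pos
  maximal : ∀ q : List ℕ, Tb.node q ≠ none → (∀ p ∈ pos, p <+: q ∨ q <+: p) → q ∈ pos

/-- The set of tableau formulas occurring on a branch. -/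
def Branch.fmls {m : ℕ} {C : Calc m} {N : Set (Fm m)} {Tb : Tableau m C N}
    (Br : Branch Tb) : Set (TabFm m) :=
  {f | ∃ p ∈ Br.pos, ∃ s, Tb.node p = some s ∧ f ∈ s}

/-- A branch is open if no closure rule has been applied (is applicable) on it. -/
def Branch.IsOpen {m : ℕ} {C : Calc m} {N : Set (Fm m)} {Tb : Tableau m C N}
    (Br : Branch Tb) : Prop := ¬ C Br.fmls []

/-- A tableau is fully expanded if on every open branch every applicable rule has been
applied, i.e. some denominator instance of the rule is already contained in the branch. -/
def Tableau.Expanded {m : ℕ} {C : Calc m} {N : Set (Fm m)} (Tb : Tableau m C N) : Prop :=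
  ∀ Br : Branch Tb, Br.IsOpen → ∀ ds, C Br.fmls ds → ∃ d ∈ ds, d ⊆ Br.fmls

/-- A `K_m(¬)`-model whose domain is (a set of) labels: the model `I(B)` constructed
from a branch has domain the set of labels occurring in `B`. -/
structure LModel (m : ℕ) where
  R : Fin m → Label m → Label m → Prop
  V : ℕ → Label m → Prop

/-- Interpretation of relation terms in a label model: `R_{¬α}` is the complement. -/
def LModel.RT {m : ℕ} (M : LModel m) : RTerm m → Label m → Label m → Prop
  | .atom a => M.R a
  | .neg α => fun t t' => ¬ M.RT α t t'

/-- Satisfaction in a label model relativised to its domain `D`. -/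
def LModel.sat {m : ℕ} (M : LModel m) (D : Set (Label m)) : Label m → Fm m → Prop
  | t, .var p => M.V p t
  | t, .neg φ => ¬ M.sat D t φ
  | t, .or φ ψ => M.sat D t φ ∨ M.sat D t ψ
  | t, .box α φ => ∀ t' ∈ D, M.RT α t t' → M.sat D t' φ

/-- Every tableau formula of `B` is true in the model `M` with domain `Lab B`:
`T(φ,t) ∈ B` implies `φ` holds at `t`; `F(φ,t) ∈ B` implies `φ` fails at `t`;
`T_R(α,t,t') ∈ B` implies `(t,t') ∈ R_α`; `F_R(α,t,t') ∈ B` implies `(t,t') ∉ R_α`. -/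
def Reflects {m : ℕ} (M : LModel m) (B : Set (TabFm m)) : Prop :=
  (∀ φ t, TabFm.T φ t ∈ B → M.sat (Lab B) t φ) ∧
  (∀ φ t, TabFm.F φ t ∈ B → ¬ M.sat (Lab B) t φ) ∧
  (∀ α t t', TabFm.TR α t t' ∈ B → M.RT α t t') ∧
  (∀ α t t', TabFm.FR α t t' ∈ B → ¬ M.RT α t t')

/-- The calculus `T_{K_m(¬)}`. -/
def TKmNot (m : ℕ) : Calc m := fun s ds =>
  -- (¬⁺) T(¬p,x) / F(p,x)
  (∃ φ x, TabFm.T (.neg φ) x ∈ s ∧ ds = [{TabFm.F φ x}]) ∨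
  -- (¬⁻) F(¬p,x) / T(p,x)
  (∃ φ x, TabFm.F (.neg φ) x ∈ s ∧ ds = [{TabFm.T φ x}]) ∨
  -- (∨⁺) T(p∨q,x) / T(p,x) | T(q,x)
  (∃ φ ψ x, TabFm.T (.or φ ψ) x ∈ s ∧ ds = [{TabFm.T φ x}, {TabFm.T ψ x}]) ∨
  -- (∨⁻) F(p∨q,x) / F(p,x), F(q,x)
  (∃ φ ψ x, TabFm.F (.or φ ψ) x ∈ s ∧ ds = [{TabFm.F φ x, TabFm.F ψ x}]) ∨
  -- (box) T([r]p,x) / F_R(r,x,y) | T(p,y), for any label y occurring on the branch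
  (∃ α φ x y, TabFm.T (.box α φ) x ∈ s ∧ y ∈ Lab s ∧
    ds = [{TabFm.FR α x y}, {TabFm.T φ y}]) ∨
  -- (dia) F([r]p,x) / T_R(r,x,f(r,p,x)), F(p,f(r,p,x))
  (∃ α φ x, TabFm.F (.box α φ) x ∈ s ∧
    ds = [{TabFm.TR α x (Label.sk α φ x), TabFm.F φ (Label.sk α φ x)}]) ∨
  -- closure rules
  (∃ φ x, TabFm.T φ x ∈ s ∧ TabFm.F φ x ∈ s ∧ ds = []) ∨
  (∃ α x y, TabFm.TR α x y ∈ s ∧ TabFm.FR α x y ∈ s ∧ ds = []) ∨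
  -- (¬R⁺) T_R(¬r,x,y) / F_R(r,x,y)
  (∃ α x y, TabFm.TR (.neg α) x y ∈ s ∧ ds = [{TabFm.FR α x y}]) ∨
  -- (¬R⁻) F_R(¬r,x,y) / T_R(r,x,y)
  (∃ α x y, TabFm.FR (.neg α) x y ∈ s ∧ ds = [{TabFm.TR α x y}])

/-- The multiset of disjuncts of a formula (disjunction treated modulo associativity
and commutativity). -/
def disjuncts {m : ℕ} : Fm m → Multiset (Fm m)
  | .or φ ψ => disjuncts φ + disjuncts ψ
  | φ => {φ}

/-- The hypertableau calculus `T_{K_m(¬)}^{hyp}`: `T_{K_m(¬)}` with the rule (∨⁺)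
replaced by the rules (split_k), `k > 1`: `T(p₁∨…∨p_k,x) / T(p₁,x) | … | T(p_k,x)`,
and extended, for all `m, n` with `m + n > 1`, with the hypertableau rules (hyp_{mn}):
from `T(¬p₁∨…∨¬p_m∨q₁∨…∨q_n, x)` together with `T(p₁,x), …, T(p_m,x)` branch into
`T(q₁,x) | … | T(q_n,x)` (a closure rule when `n = 0`), applicable only when
`p₁,…,p_m` are propositional variables and none of `q₁,…,q_n` is a negated
propositional variable (disjunction treated modulo associativity and commutativity). -/
def TKmNotHyp (m : ℕ) : Calc m := fun s ds =>
  (∃ φ x, TabFm.T (.neg φ) x ∈ s ∧ ds = [{TabFm.F φ x}]) ∨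
  (∃ φ x, TabFm.F (.neg φ) x ∈ s ∧ ds = [{TabFm.T φ x}]) ∨
  -- (split_k), k > 1
  (∃ (φ : Fm m) (x : Label m) (qs : Multiset (Fm m)),
    TabFm.T φ x ∈ s ∧ disjuncts φ = qs ∧ 2 ≤ Multiset.card qs ∧
    ds = qs.toList.map (fun q => {TabFm.T q x})) ∨
  -- (hyp_{mn}), m + n > 1
  (∃ (φ : Fm m) (x : Label m) (ps : Multiset ℕ) (qs : Multiset (Fm m)),
    TabFm.T φ x ∈ s ∧
    disjuncts φ = ps.map (fun p => Fm.neg (Fm.var p)) + qs ∧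
    (∀ q ∈ qs, ∀ p : ℕ, q ≠ Fm.neg (Fm.var p)) ∧
    2 ≤ Multiset.card ps + Multiset.card qs ∧
    (∀ p ∈ ps, TabFm.T (Fm.var p) x ∈ s) ∧
    ds = qs.toList.map (fun q => {TabFm.T q x})) ∨
  (∃ φ ψ x, TabFm.F (.or φ ψ) x ∈ s ∧ ds = [{TabFm.F φ x, TabFm.F ψ x}]) ∨
  (∃ α φ x y, TabFm.T (.box α φ) x ∈ s ∧ y ∈ Lab s ∧
    ds = [{TabFm.FR α x y}, {TabFm.T φ y}]) ∨
  (∃ α φ x, TabFm.F (.box α φ) x ∈ s ∧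
    ds = [{TabFm.TR α x (Label.sk α φ x), TabFm.F φ (Label.sk α φ x)}]) ∨
  (∃ φ x, TabFm.T φ x ∈ s ∧ TabFm.F φ x ∈ s ∧ ds = []) ∨
  (∃ α x y, TabFm.TR α x y ∈ s ∧ TabFm.FR α x y ∈ s ∧ ds = []) ∨
  (∃ α x y, TabFm.TR (.neg α) x y ∈ s ∧ ds = [{TabFm.FR α x y}]) ∨
  (∃ α x y, TabFm.FR (.neg α) x y ∈ s ∧ ds = [{TabFm.TR α x y}])

section Aux
variable {m : ℕ}

@[simp] lemma disjuncts_or (φ ψ : Fm m) : disjuncts (.or φ ψ) = disjuncts φ + disjuncts ψ := rfl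
@[simp] lemma disjuncts_var (p : ℕ) : disjuncts (.var p : Fm m) = {Fm.var p} := rfl
@[simp] lemma disjuncts_neg (φ : Fm m) : disjuncts (.neg φ) = {Fm.neg φ} := rfl
@[simp] lemma disjuncts_box (α : RTerm m) (φ : Fm m) : disjuncts (.box α φ) = {Fm.box α φ} := rfl

@[simp] lemma ksat_var (M : KModel m) (w : M.W) (p : ℕ) : M.sat w (.var p) ↔ M.V p w := Iff.rfl
@[simp] lemma ksat_neg (M : KModel m) (w : M.W) (φ : Fm m) : M.sat w (.neg φ) ↔ ¬ M.sat w φ := Iff.rfl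
@[simp] lemma ksat_or (M : KModel m) (w : M.W) (φ ψ : Fm m) : M.sat w (.or φ ψ) ↔ M.sat w φ ∨ M.sat w ψ := Iff.rfl
@[simp] lemma ksat_box (M : KModel m) (w : M.W) (α : RTerm m) (φ : Fm m) :
    M.sat w (.box α φ) ↔ ∀ u, M.RT α w u → M.sat u φ := Iff.rfl

example (l : List ℕ) (a : ℕ) (h : a ∈ l) : ∃ i : ℕ, l[i]? = some a := List.mem_iff_getElem?.mp h
example (l1 l2 : List ℕ) (a:ℕ) (h : l1 <+: l2 ++ [a]) (hl : l1.length ≤ l2.length) : l1 <+: l2 :=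
  List.prefix_of_prefix_length_le h (List.prefix_append _ _) hl
example (l1 l2 : List ℕ) (h : l1 <+: l2) (hl : l1.length = l2.length) : l1 = l2 := List.IsPrefix.eq_of_length h hl
example (s : Multiset ℕ) (h : s.toList = []) : s = 0 := by simpa using h
end Aux
section Aux2
variable {m : ℕ}

lemma one_le_card_disjuncts (φ : Fm m) : 1 ≤ Multiset.card (disjuncts φ) := by
  induction φ with
  | var p => simp
  | neg φ _ => simp
  | box α φ _ => simp
  | or φ ψ ih1 ih2 => simp only [disjuncts_or, Multiset.card_add]; omega

def sz : Fm m → ℕ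
  | .var _ => 1
  | .neg φ => sz φ + 1
  | .or φ ψ => sz φ + sz ψ + 1
  | .box _ φ => sz φ + 1

lemma one_le_sz (φ : Fm m) : 1 ≤ sz φ := by
  cases φ <;> simp [sz]

lemma sz_le_of_mem_disjuncts {q φ : Fm m} (h : q ∈ disjuncts φ) : sz q ≤ sz φ := by
  induction φ with
  | var p => simp at h; subst h; rfl
  | neg φ _ => simp at h; subst h; rfl
  | box α φ _ => simp at h; subst h; rfl
  | or φ ψ ih1 ih2 =>
    rw [disjuncts_or, Multiset.mem_add] at h
    rcases h with h | h
    · have := ih1 h; simp only [sz]; omega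
    · have := ih2 h; simp only [sz]; omega

lemma exists_disjunct_sat (M : KModel m) (w : M.W) :
    ∀ φ : Fm m, M.sat w φ → ∃ q ∈ disjuncts φ, M.sat w q := by
  intro φ
  induction φ with
  | var p => intro h; exact ⟨_, by simp, h⟩
  | neg φ _ => intro h; exact ⟨_, by simp, h⟩
  | box α φ _ => intro h; exact ⟨_, by simp, h⟩
  | or φ ψ ih1 ih2 =>
    intro h
    rcases (ksat_or M w φ ψ).mp h with h | h
    · obtain ⟨q, hq, hs⟩ := ih1 h
      exact ⟨q, by rw [disjuncts_or, Multiset.mem_add]; exact Or.inl hq, hs⟩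
    · obtain ⟨q, hq, hs⟩ := ih2 h
      exact ⟨q, by rw [disjuncts_or, Multiset.mem_add]; exact Or.inr hq, hs⟩

@[simp] lemma lsat_var (M : LModel m) (D : Set (Label m)) (t : Label m) (p : ℕ) :
    M.sat D t (.var p) ↔ M.V p t := Iff.rfl
@[simp] lemma lsat_neg (M : LModel m) (D : Set (Label m)) (t : Label m) (φ : Fm m) :
    M.sat D t (.neg φ) ↔ ¬ M.sat D t φ := Iff.rfl
@[simp] lemma lsat_or (M : LModel m) (D : Set (Label m)) (t : Label m) (φ ψ : Fm m) :
    M.sat D t (.or φ ψ) ↔ M.sat D t φ ∨ M.sat D t ψ := Iff.rfl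
@[simp] lemma lsat_box (M : LModel m) (D : Set (Label m)) (t : Label m) (α : RTerm m) (φ : Fm m) :
    M.sat D t (.box α φ) ↔ ∀ t' ∈ D, M.RT α t t' → M.sat D t' φ := Iff.rfl

lemma lsat_of_disjunct (M : LModel m) (D : Set (Label m)) (t : Label m) :
    ∀ φ q : Fm m, q ∈ disjuncts φ → M.sat D t q → M.sat D t φ := by
  intro φ
  induction φ with
  | var p => intro q hq hs; simp at hq; rwa [hq] at hs
  | neg φ _ => intro q hq hs; simp at hq; rwa [hq] at hs
  | box α φ _ => intro q hq hs; simp at hq; rwa [hq] at hs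
  | or φ ψ ih1 ih2 =>
    intro q hq hs
    rw [disjuncts_or, Multiset.mem_add] at hq
    rcases hq with hq | hq
    · exact Or.inl (ih1 q hq hs)
    · exact Or.inr (ih2 q hq hs)

/-- Truth of a tableau formula in a `K_m(¬)`-model under a label interpretation. -/
def holds (M : KModel m) (ι : Label m → M.W) : TabFm m → Prop
  | .T φ t => M.sat (ι t) φ
  | .F φ t => ¬ M.sat (ι t) φ
  | .TR α t t' => M.RT α (ι t) (ι t')
  | .FR α t t' => ¬ M.RT α (ι t) (ι t')

@[simp] lemma holds_T (M : KModel m) (ι : Label m → M.W) (φ : Fm m) (t : Label m) :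
    holds M ι (.T φ t) ↔ M.sat (ι t) φ := Iff.rfl
@[simp] lemma holds_F (M : KModel m) (ι : Label m → M.W) (φ : Fm m) (t : Label m) :
    holds M ι (.F φ t) ↔ ¬ M.sat (ι t) φ := Iff.rfl
@[simp] lemma holds_TR (M : KModel m) (ι : Label m → M.W) (α : RTerm m) (t t' : Label m) :
    holds M ι (.TR α t t') ↔ M.RT α (ι t) (ι t') := Iff.rfl
@[simp] lemma holds_FR (M : KModel m) (ι : Label m → M.W) (α : RTerm m) (t t' : Label m) :
    holds M ι (.FR α t t') ↔ ¬ M.RT α (ι t) (ι t') := Iff.rfl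

open scoped Classical in
/-- Canonical interpretation of labels in a model, Skolemizing diamonds. -/
noncomputable def interp (M : KModel m) (v : M.W) : Label m → M.W
  | .a0 => v
  | .sk α φ x =>
    if h : ∃ u, M.RT α (interp M v x) u ∧ ¬ M.sat u φ then h.choose
    else Classical.choice M.ne

@[simp] lemma interp_a0 (M : KModel m) (v : M.W) : interp M v .a0 = v := rfl

lemma interp_sk (M : KModel m) (v : M.W) {α : RTerm m} {φ : Fm m} {x : Label m}
    (h : ∃ u, M.RT α (interp M v x) u ∧ ¬ M.sat u φ) :
    M.RT α (interp M v x) (interp M v (.sk α φ x)) ∧ ¬ M.sat (interp M v (.sk α φ x)) φ := by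
  rw [show interp M v (.sk α φ x) = h.choose by rw [interp]; exact dif_pos h]
  exact h.choose_spec

end Aux2
section Sound
variable {m : ℕ}

lemma step_sound (M : KModel m) (v : M.W) {s : Set (TabFm m)} {ds : List (Set (TabFm m))}
    (hs : ∀ f ∈ s, holds M (interp M v) f) (hC : TKmNotHyp m s ds) :
    ∃ (i : ℕ) (d : Set (TabFm m)), ds[i]? = some d ∧ ∀ f ∈ s ∪ d, holds M (interp M v) f := by
  set ι := interp M v with hι
  rcases hC with ⟨φ, x, hmem, rfl⟩ | ⟨φ, x, hmem, rfl⟩ | ⟨φ, x, qs, hmem, hdis, hcard, rfl⟩ |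
    ⟨φ, x, ps, qs, hmem, hdis, hqs, hcard, hps, rfl⟩ | ⟨φ, ψ, x, hmem, rfl⟩ |
    ⟨α, φ, x, y, hmem, hy, rfl⟩ | ⟨α, φ, x, hmem, rfl⟩ | ⟨φ, x, h1, h2, rfl⟩ |
    ⟨α, x, y, h1, h2, rfl⟩ | ⟨α, x, y, hmem, rfl⟩ | ⟨α, x, y, hmem, rfl⟩
  · -- ¬⁺
    refine ⟨0, _, rfl, ?_⟩
    intro f hf
    rcases hf with hf | hf
    · exact hs f hf
    · rcases hf with rfl
      exact (ksat_neg M (ι x) φ).mp (hs _ hmem)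
  · -- ¬⁻
    refine ⟨0, _, rfl, ?_⟩
    intro f hf
    rcases hf with hf | hf
    · exact hs f hf
    · rcases hf with rfl
      have := hs _ hmem
      simp only [holds_F, ksat_neg, not_not] at this
      exact this
  · -- split
    obtain ⟨q, hq, hsq⟩ := exists_disjunct_sat M (ι x) φ (hs _ hmem)
    rw [hdis] at hq
    have hmemL : ({TabFm.T q x} : Set (TabFm m)) ∈ qs.toList.map (fun q => {TabFm.T q x}) :=
      List.mem_map.mpr ⟨q, Multiset.mem_toList.mpr hq, rfl⟩
    obtain ⟨i, hi⟩ := List.mem_iff_getElem?.mp hmemL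
    refine ⟨i, _, hi, ?_⟩
    intro f hf
    rcases hf with hf | hf
    · exact hs f hf
    · rcases hf with rfl; exact hsq
  · -- hyp
    obtain ⟨q, hq, hsq⟩ := exists_disjunct_sat M (ι x) φ (hs _ hmem)
    rw [hdis, Multiset.mem_add] at hq
    rcases hq with hq | hq
    · obtain ⟨p, hp, rfl⟩ := Multiset.mem_map.mp hq
      exact absurd (hs _ (hps p hp)) (by simpa using hsq)
    · have hmemL : ({TabFm.T q x} : Set (TabFm m)) ∈ qs.toList.map (fun q => {TabFm.T q x}) :=
        List.mem_map.mpr ⟨q, Multiset.mem_toList.mpr hq, rfl⟩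
      obtain ⟨i, hi⟩ := List.mem_iff_getElem?.mp hmemL
      refine ⟨i, _, hi, ?_⟩
      intro f hf
      rcases hf with hf | hf
      · exact hs f hf
      · rcases hf with rfl; exact hsq
  · -- ∨⁻
    refine ⟨0, _, rfl, ?_⟩
    have hor := hs _ hmem
    simp only [holds_F, ksat_or, not_or] at hor
    intro f hf
    rcases hf with hf | hf
    · exact hs f hf
    · rcases hf with rfl | hf
      · exact hor.1
      · rcases hf with rfl; exact hor.2
  · -- box
    by_cases hR : M.RT α (ι x) (ι y)
    · refine ⟨1, _, rfl, ?_⟩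
      intro f hf
      rcases hf with hf | hf
      · exact hs f hf
      · rcases hf with rfl
        exact (ksat_box M (ι x) α φ).mp (hs _ hmem) (ι y) hR
    · refine ⟨0, _, rfl, ?_⟩
      intro f hf
      rcases hf with hf | hf
      · exact hs f hf
      · rcases hf with rfl; exact hR
  · -- dia
    have hF := hs _ hmem
    simp only [holds_F, ksat_box, not_forall] at hF
    obtain ⟨u, hu⟩ := hF
    have h : ∃ u, M.RT α (interp M v x) u ∧ ¬ M.sat u φ := by
      obtain ⟨h1, h2⟩ := hu
      exact ⟨u, h1, h2⟩
    have hsk := interp_sk M v h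
    refine ⟨0, _, rfl, ?_⟩
    intro f hf
    rcases hf with hf | hf
    · exact hs f hf
    · rcases hf with rfl | hf
      · exact hsk.1
      · rcases hf with rfl; exact hsk.2
  · exact absurd (hs _ h1) (hs _ h2)
  · exact absurd (hs _ h1) (hs _ h2)
  · -- ¬R⁺
    refine ⟨0, _, rfl, ?_⟩
    intro f hf
    rcases hf with hf | hf
    · exact hs f hf
    · rcases hf with rfl
      have h2 : M.RT (.neg α) (ι x) (ι y) := hs _ hmem
      exact h2
  · -- ¬R⁻
    refine ⟨0, _, rfl, ?_⟩
    intro f hf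
    rcases hf with hf | hf
    · exact hs f hf
    · rcases hf with rfl
      have h2 : ¬ M.RT (.neg α) (ι x) (ι y) := hs _ hmem
      exact not_not.mp h2

end Sound
section Path

open scoped Classical in
/-- A maximal path through "good" positions. -/
noncomputable def path (g : List ℕ → Prop) : ℕ → Option (List ℕ)
  | 0 => some []
  | n+1 => (path g n).bind fun p =>
      if h : ∃ i, g (p ++ [i]) then some (p ++ [h.choose]) else none

lemma path_length {g : List ℕ → Prop} : ∀ {n : ℕ} {p : List ℕ}, path g n = some p → p.length = n := by
  intro n
  induction n with
  | zero => intro p h; simp [path] at h; simp [h]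
  | succ n ih =>
    intro p h
    rw [path] at h
    rcases h0 : path g n with _ | p0
    · rw [h0] at h; simp at h
    · rw [h0] at h
      simp only [Option.bind_some] at h
      split at h
      · rcases Option.some_injective _ h.symm with rfl
        simp [ih h0]
      · simp at h

lemma path_good {g : List ℕ → Prop} (h0 : g []) :
    ∀ {n : ℕ} {p : List ℕ}, path g n = some p → g p := by
  intro n
  induction n with
  | zero => intro p h; simp [path] at h; subst h; exact h0
  | succ n ih =>
    intro p h
    rw [path] at h
    rcases hp : path g n with _ | p0
    · rw [hp] at h; simp at h
    · rw [hp] at h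
      simp only [Option.bind_some] at h
      split at h
      next hex =>
        rcases Option.some_injective _ h.symm with rfl
        exact hex.choose_spec
      · simp at h

lemma path_prefix {g : List ℕ → Prop} :
    ∀ {n : ℕ} {p q : List ℕ}, path g n = some p → q <+: p → path g q.length = some q := by
  intro n
  induction n with
  | zero =>
    intro p q h hpre
    simp [path] at h
    subst h
    rcases List.prefix_nil.mp hpre with rfl
    simp [path]
  | succ n ih =>
    intro p q h hpre
    by_cases hlen : q.length = p.length
    · rw [hpre.eq_of_length hlen, path_length h]
      exact h
    · rw [path] at h
      rcases hp : path g n with _ | p0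
      · rw [hp] at h; simp at h
      · rw [hp] at h
        simp only [Option.bind_some] at h
        split at h
        next hex =>
          rcases Option.some_injective _ h.symm with rfl
          have hlq : q.length ≤ p0.length := by
            have := hpre.length_le
            simp only [List.length_append, List.length_cons, List.length_nil] at this hlen
            omega
          exact ih hp (List.prefix_of_prefix_length_le hpre (List.prefix_append _ _) hlq)
        · simp at h

lemma path_none_succ {g : List ℕ → Prop} {n : ℕ} (h : path g n = none) : path g (n+1) = none := by
  rw [path, h]; rfl

lemma path_mono_none {g : List ℕ → Prop} {k n : ℕ} (hk : k ≤ n) (h : path g k = none) :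
    path g n = none := by
  induction n with
  | zero =>
    have hk0 : k = 0 := by omega
    rwa [← hk0]
  | succ n ih =>
    rcases Nat.lt_or_ge k (n+1) with hlt | hge
    · exact path_none_succ (ih (by omega))
    · have : k = n + 1 := by omega
      rwa [← this]

end Path
section BranchCon
variable {m : ℕ} {N : Set (Fm m)}

lemma node_ne_none_of_prefix (Tb : Tableau m (TKmNotHyp m) N) :
    ∀ q, Tb.node q ≠ none → ∀ p, p <+: q → Tb.node p ≠ none := by
  intro q
  induction q using List.reverseRecOn with
  | nil => intro h p hp; rcases List.prefix_nil.mp hp with rfl; exact h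
  | append_singleton q' c ih =>
    intro h p hp
    by_cases hlen : p.length = (q' ++ [c]).length
    · rw [hp.eq_of_length hlen]; exact h
    · have hq' : Tb.node q' ≠ none := Tb.tree q' c h
      refine ih hq' p (List.prefix_of_prefix_length_le hp (List.prefix_append _ _) ?_)
      have := hp.length_le
      simp only [List.length_append, List.length_cons, List.length_nil] at this hlen
      omega

lemma exists_open_branch (Tb : Tableau m (TKmNotHyp m) N) (M : KModel m) (v : M.W)
    (hroot : ∀ f ∈ initial N, holds M (interp M v) f) : ∃ Br : Branch Tb, Br.IsOpen := by
  classical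
  set ι := interp M v with hι
  set g : List ℕ → Prop := fun p => ∃ s, Tb.node p = some s ∧ ∀ f ∈ s, holds M ι f with hg
  have hg0 : g [] := ⟨initial N, Tb.rootEq, hroot⟩
  have hpath0 : path g 0 = some [] := rfl
  have hchild : ∀ p, g p → ∀ c, Tb.node (p ++ [c]) ≠ none → ∃ i, g (p ++ [i]) := by
    intro p hp c hc
    obtain ⟨s, hnode, hholds⟩ := hp
    rcases Tb.step p s hnode with hleaf | ⟨ds, hC, hch⟩
    · exact absurd (hleaf c) hc
    · obtain ⟨j, d, hj, hholds'⟩ := step_sound M v hholds hC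
      refine ⟨j, s ∪ d, ?_, hholds'⟩
      rw [hch j, hj]; rfl
  set pos : Set (List ℕ) := {p | path g p.length = some p} with hpos
  have hmem_good : ∀ p ∈ pos, g p := fun p hp => path_good hg0 hp
  have hdown : ∀ p ∈ pos, ∀ q : List ℕ, q <+: p → q ∈ pos := by
    intro p hp q hq
    exact path_prefix hp hq
  refine ⟨⟨pos, ?_, ?_, hdown, ?_⟩, ?_⟩
  · -- inTree
    intro p hp
    obtain ⟨s, hnode, _⟩ := hmem_good p hp
    rw [hnode]; exact Option.some_ne_none _
  · -- chain
    intro p hp q hq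
    rcases le_total p.length q.length with hle | hle
    · left
      have hq' : q.take p.length <+: q := List.take_prefix _ _
      have := path_prefix hq hq'
      rw [List.length_take, min_eq_left hle] at this
      rw [hp] at this
      have hpt := Option.some_injective _ this
      rw [hpt]; exact hq'
    · right
      have hp' : p.take q.length <+: p := List.take_prefix _ _
      have := path_prefix hp hp'
      rw [List.length_take, min_eq_left hle] at this
      rw [hq] at this
      have hpt := Option.some_injective _ this
      rw [hpt]; exact hp'
  · -- maximal
    intro q hq hcomp
    rcases hcase : path g q.length with _ | p
    · -- path dies before q.length
      have hne0 : path g 0 ≠ none := by rw [hpath0]; exact Option.some_ne_none _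
      have hPex : ∃ k, path g k = none := ⟨q.length, hcase⟩
      have hkspec : path g (Nat.find hPex) = none := Nat.find_spec hPex
      have hkpos : Nat.find hPex ≠ 0 := fun h0 => hne0 (h0 ▸ hkspec)
      obtain ⟨k', hks⟩ := Nat.exists_eq_succ_of_ne_zero hkpos
      rw [hks] at hkspec
      have hk' : path g k' ≠ none := Nat.find_min hPex (by omega)
      rcases hp' : path g k' with _ | p
      · exact absurd hp' hk'
      have hplen : p.length = k' := path_length hp'
      have hppos : p ∈ pos := by rw [hpos]; simp only [Set.mem_setOf_eq]; rw [hplen]; exact hp'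
      rcases hcomp p hppos with hpq | hqp
      · -- p <+: q
        by_cases hqe : q = p
        · rw [hqe]; exact hppos
        have hlt : p.length < q.length := by
          have hle : k' + 1 ≤ q.length := by
            have := Nat.find_min' hPex hcase
            omega
          omega
        obtain ⟨t, rfl⟩ := hpq
        rcases t with _ | ⟨c, r⟩
        · simp at hlt
        have hc : Tb.node (p ++ [c]) ≠ none :=
          node_ne_none_of_prefix Tb _ hq (p ++ [c]) ⟨r, by simp⟩
        obtain ⟨i, hi⟩ := hchild p (path_good hg0 hp') c hc
        have hkn := hkspec
        rw [path, hp'] at hkn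
        simp only [Option.bind_some] at hkn
        rw [dif_pos ⟨i, hi⟩] at hkn
        simp at hkn
      · -- q <+: p
        exact hdown p hppos q hqp
    · -- path alive at q.length
      have hplen : p.length = q.length := path_length hcase
      have hppos : p ∈ pos := by rw [hpos]; simp only [Set.mem_setOf_eq]; rw [hplen]; exact hcase
      rcases hcomp p hppos with hpq | hqp
      · rcases hpq.eq_of_length hplen with rfl; exact hppos
      · rcases (hqp.eq_of_length hplen.symm) with rfl; exact hppos
  · -- IsOpen
    set Br : Branch Tb := ⟨pos, _, _, hdown, _⟩
    have hall : ∀ f ∈ Br.fmls, holds M ι f := by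
      rintro f ⟨p, hp, s, hnode, hf⟩
      obtain ⟨s', hnode', hh⟩ := hmem_good p hp
      rw [hnode] at hnode'
      rcases Option.some_injective _ hnode' with rfl
      exact hh f hf
    intro hC
    rcases hC with ⟨φ, x, hmem, heq⟩ | ⟨φ, x, hmem, heq⟩ | ⟨φ, x, qs, hmem, hdis, hcard, heq⟩ |
      ⟨φ, x, ps, qs, hmem, hdis, hqs, hcard, hps, heq⟩ | ⟨φ, ψ, x, hmem, heq⟩ |
      ⟨α, φ, x, y, hmem, hy, heq⟩ | ⟨α, φ, x, hmem, heq⟩ | ⟨φ, x, h1, h2, _⟩ |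
      ⟨α, x, y, h1, h2, _⟩ | ⟨α, x, y, hmem, heq⟩ | ⟨α, x, y, hmem, heq⟩
    · simp at heq
    · simp at heq
    · -- split with empty denominators: impossible
      have hqs0 : qs = 0 := by
        have := heq.symm
        rw [List.map_eq_nil_iff] at this
        exact Multiset.toList_eq_nil.mp this
      rw [hqs0] at hcard
      simp at hcard
    · -- hyp closure
      have hqs0 : qs = 0 := by
        have := heq.symm
        rw [List.map_eq_nil_iff] at this
        exact Multiset.toList_eq_nil.mp this
      rw [hqs0, add_zero] at hdis
      obtain ⟨q, hqmem, hsq⟩ := exists_disjunct_sat M (ι x) φ (hall _ hmem)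
      rw [hdis] at hqmem
      obtain ⟨p, hp, rfl⟩ := Multiset.mem_map.mp hqmem
      exact (by simpa using hsq : ¬ M.V p (ι x)) (hall _ (hps p hp))
    · simp at heq
    · simp at heq
    · simp at heq
    · exact absurd (hall _ h1) (hall _ h2)
    · exact absurd (hall _ h1) (hall _ h2)
    · simp at heq
    · simp at heq

end BranchCon
section Complete
variable {m : ℕ}

/-- The model constructed from an open saturated branch. -/
def mkModel (S : Set (TabFm m)) : LModel m where
  R := fun a t t' => TabFm.TR (.atom a) t t' ∈ S
  V := fun p t => TabFm.T (.var p) t ∈ S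

lemma rel_reflect {S : Set (TabFm m)}
    (hO : ¬ TKmNotHyp m S [])
    (hE : ∀ ds, TKmNotHyp m S ds → ∃ d ∈ ds, d ⊆ S) :
    ∀ (α : RTerm m) (t t' : Label m),
      (TabFm.TR α t t' ∈ S → (mkModel S).RT α t t') ∧
      (TabFm.FR α t t' ∈ S → ¬ (mkModel S).RT α t t') := by
  intro α
  induction α with
  | atom a =>
    intro t t'
    refine ⟨fun h => h, fun hF hT => ?_⟩
    exact hO (Or.inr (Or.inr (Or.inr (Or.inr (Or.inr (Or.inr (Or.inr (Or.inr (Or.inl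
      ⟨.atom a, t, t', hT, hF, rfl⟩)))))))))
  | neg α ih =>
    intro t t'
    constructor
    · intro h
      have hC : TKmNotHyp m S [{TabFm.FR α t t'}] :=
        Or.inr (Or.inr (Or.inr (Or.inr (Or.inr (Or.inr (Or.inr (Or.inr (Or.inr (Or.inl
          ⟨α, t, t', h, rfl⟩)))))))))
      obtain ⟨d, hd, hsub⟩ := hE _ hC
      simp only [List.mem_singleton] at hd
      subst hd
      have hF : TabFm.FR α t t' ∈ S := hsub rfl
      exact (ih t t').2 hF
    · intro h
      have hC : TKmNotHyp m S [{TabFm.TR α t t'}] :=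
        Or.inr (Or.inr (Or.inr (Or.inr (Or.inr (Or.inr (Or.inr (Or.inr (Or.inr (Or.inr
          ⟨α, t, t', h, rfl⟩)))))))))
      obtain ⟨d, hd, hsub⟩ := hE _ hC
      simp only [List.mem_singleton] at hd
      subst hd
      have hT : TabFm.TR α t t' ∈ S := hsub rfl
      exact fun hn => hn ((ih t t').1 hT)

lemma fm_reflect {S : Set (TabFm m)}
    (hO : ¬ TKmNotHyp m S [])
    (hE : ∀ ds, TKmNotHyp m S ds → ∃ d ∈ ds, d ⊆ S) :
    ∀ (n : ℕ) (φ : Fm m), sz φ ≤ n → ∀ t : Label m,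
      (TabFm.T φ t ∈ S → (mkModel S).sat (Lab S) t φ) ∧
      (TabFm.F φ t ∈ S → ¬ (mkModel S).sat (Lab S) t φ) := by
  intro n
  induction n with
  | zero => intro φ h; exact absurd h (by have := one_le_sz φ; omega)
  | succ n ih =>
    intro φ hsz t
    cases φ with
    | var p =>
      refine ⟨fun h => h, fun hF hT => ?_⟩
      exact hO (Or.inr (Or.inr (Or.inr (Or.inr (Or.inr (Or.inr (Or.inr (Or.inl
        ⟨.var p, t, hT, hF, rfl⟩))))))))
    | neg φ =>
      have hszφ : sz φ ≤ n := by simp [sz] at hsz; omega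
      constructor
      · intro h
        have hC : TKmNotHyp m S [{TabFm.F φ t}] := Or.inl ⟨φ, t, h, rfl⟩
        obtain ⟨d, hd, hsub⟩ := hE _ hC
        simp only [List.mem_singleton] at hd
        subst hd
        exact (ih φ hszφ t).2 (hsub rfl)
      · intro h
        have hC : TKmNotHyp m S [{TabFm.T φ t}] := Or.inr (Or.inl ⟨φ, t, h, rfl⟩)
        obtain ⟨d, hd, hsub⟩ := hE _ hC
        simp only [List.mem_singleton] at hd
        subst hd
        have := (ih φ hszφ t).1 (hsub rfl)
        simp only [lsat_neg, not_not]
        exact this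
    | or φ ψ =>
      constructor
      · intro h
        have hcard : 2 ≤ Multiset.card (disjuncts (Fm.or φ ψ)) := by
          rw [disjuncts_or, Multiset.card_add]
          have := one_le_card_disjuncts φ
          have := one_le_card_disjuncts ψ
          omega
        have hC : TKmNotHyp m S
            ((disjuncts (Fm.or φ ψ)).toList.map fun q => {TabFm.T q t}) :=
          Or.inr (Or.inr (Or.inl ⟨.or φ ψ, t, disjuncts (.or φ ψ), h, rfl, hcard, rfl⟩))
        obtain ⟨d, hd, hsub⟩ := hE _ hC
        obtain ⟨q, hq, rfl⟩ := List.mem_map.mp hd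
        have hqmem : q ∈ disjuncts (Fm.or φ ψ) := Multiset.mem_toList.mp hq
        have hszq : sz q ≤ n := by
          have h1 := sz_le_of_mem_disjuncts hqmem
          rw [disjuncts_or, Multiset.mem_add] at hqmem
          rcases hqmem with hqm | hqm
          · have := sz_le_of_mem_disjuncts hqm
            have := one_le_sz ψ
            simp [sz] at hsz
            omega
          · have := sz_le_of_mem_disjuncts hqm
            have := one_le_sz φ
            simp [sz] at hsz
            omega
        have hsatq := (ih q hszq t).1 (hsub rfl)
        exact lsat_of_disjunct (mkModel S) (Lab S) t (.or φ ψ) q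
          (Multiset.mem_toList.mp hq) hsatq
      · intro h
        have hC : TKmNotHyp m S [{TabFm.F φ t, TabFm.F ψ t}] :=
          Or.inr (Or.inr (Or.inr (Or.inr (Or.inl ⟨φ, ψ, t, h, rfl⟩))))
        obtain ⟨d, hd, hsub⟩ := hE _ hC
        simp only [List.mem_singleton] at hd
        subst hd
        have h1 := (ih φ (by simp [sz] at hsz; have := one_le_sz ψ; omega) t).2
          (hsub (Or.inl rfl))
        have h2 := (ih ψ (by simp [sz] at hsz; have := one_le_sz φ; omega) t).2
          (hsub (Or.inr rfl))
        simp only [lsat_or, not_or]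
        exact ⟨h1, h2⟩
    | box α φ =>
      have hszφ : sz φ ≤ n := by simp [sz] at hsz; omega
      constructor
      · intro h
        intro t' ht' hR
        have hC : TKmNotHyp m S [{TabFm.FR α t t'}, {TabFm.T φ t'}] :=
          Or.inr (Or.inr (Or.inr (Or.inr (Or.inr (Or.inl ⟨α, φ, t, t', h, ht', rfl⟩)))))
        obtain ⟨d, hd, hsub⟩ := hE _ hC
        simp only [List.mem_cons, List.mem_singleton, List.not_mem_nil, or_false] at hd
        rcases hd with rfl | rfl
        · exact absurd hR ((rel_reflect hO hE α t t').2 (hsub rfl))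
        · exact (ih φ hszφ t').1 (hsub rfl)
      · intro h
        have hC : TKmNotHyp m S
            [{TabFm.TR α t (Label.sk α φ t), TabFm.F φ (Label.sk α φ t)}] :=
          Or.inr (Or.inr (Or.inr (Or.inr (Or.inr (Or.inr (Or.inl ⟨α, φ, t, h, rfl⟩))))))
        obtain ⟨d, hd, hsub⟩ := hE _ hC
        simp only [List.mem_singleton] at hd
        subst hd
        have hTR : TabFm.TR α t (Label.sk α φ t) ∈ S := hsub (Or.inl rfl)
        have hF : TabFm.F φ (Label.sk α φ t) ∈ S := hsub (Or.inr rfl)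
        have hmemLab : Label.sk α φ t ∈ Lab S := by
          right
          exact ⟨_, hTR, Or.inr rfl⟩
        intro hsat
        exact (ih φ hszφ _).2 hF
          (hsat (Label.sk α φ t) hmemLab ((rel_reflect hO hE α t _).1 hTR))

end Complete
/-- The hypertableau calculus `T_{K_m(¬)}^{hyp}` is sound and
constructively complete for the logic `K_m(¬)`. -/
theorem TKmNotHyp_sound_and_constructively_complete (m : ℕ) :
    (∀ N : Set (Fm m), N.Finite → Satisfiable N →
      ∀ Tb : Tableau m (TKmNotHyp m) N, Tb.Expanded →
        ∃ Br : Branch Tb, Br.IsOpen) ∧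
    (∀ (N : Set (Fm m)) (Tb : Tableau m (TKmNotHyp m) N), Tb.Expanded →
      ∀ Br : Branch Tb, Br.IsOpen → ∃ M : LModel m, Reflects M Br.fmls) := by
  constructor
  · intro N _ hsat Tb _
    obtain ⟨M, v, hv⟩ := hsat
    apply exists_open_branch Tb M v
    rintro f ⟨φ, hφ, rfl⟩
    exact hv φ hφ
  · intro N Tb hexp Br hopen
    have hE := hexp Br hopen
    refine ⟨mkModel Br.fmls, ?_, ?_, ?_, ?_⟩
    · intro φ t h; exact (fm_reflect hopen hE (sz φ) φ le_rfl t).1 h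
    · intro φ t h; exact (fm_reflect hopen hE (sz φ) φ le_rfl t).2 h
    · intro α t t' h; exact (rel_reflect hopen hE α t t').1 h
    · intro α t t' h; exact (rel_reflect hopen hE α t t').2 h

end KmNotTableau
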